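/- Let 1 ≤ n < d, let P ∈ G(d,n), let A : P → P^⊥ be Lipschitz with Lip(A) ≤ M, and let Γ = {p + A(p) : p ∈ P}. If V ∈ G(d,n) satisfies ‖π_V − π_P‖ ≤ 1/(2(1+M)), then there exists a Lipschitz map A_V : V → V^⊥ with Lip(A_V) ≤ 3(1+M) such that Γ = {v + A_V(v) : v ∈ V}. -/

import Mathlib

open MeasureTheory Metric Module Set
open scoped ENNReal NNReal RealInnerProductSpace

noncomputable section

/-- Euclidean space `ℝ^d`. -/
abbrev Euc (d : ℕ) : Type := EuclideanSpace ℝ (Fin d)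

/-- Orthogonal projection onto a subspace, as a map `ℝ^d → ℝ^d`. -/
noncomputable def projCLM {d : ℕ} (V : Submodule ℝ (Euc d)) : Euc d →L[ℝ] Euc d :=
  V.subtypeL.comp V.orthogonalProjectionOnto

/-- `E` is `n`-Ahlfors–David regular with constants `C₁ ≤ C₂`. -/
def IsADR {d : ℕ} (n : ℕ) (C₁ C₂ : ℝ) (E : Set (Euc d)) : Prop :=
  0 < C₁ ∧ C₁ ≤ C₂ ∧ ∀ x ∈ E, ∀ r : ℝ, 0 < r → ENNReal.ofReal r ≤ EMetric.diam E →
    ENNReal.ofReal (C₁ * r ^ n) ≤ μH[n] (E ∩ closedBall x r) ∧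
      μH[n] (E ∩ closedBall x r) ≤ ENNReal.ofReal (C₂ * r ^ n)

/-- `Γ` is an `n`-dimensional Lipschitz graph with Lipschitz constant at most `M`:
`Γ = {p + A p : p ∈ P}` for an `n`-dimensional subspace `P` and `M`-Lipschitz `A : P → P^⊥`. -/
def IsLipGraph {d : ℕ} (n : ℕ) (M : ℝ≥0) (Γ : Set (Euc d)) : Prop :=
  ∃ (P : Submodule ℝ (Euc d)) (A : P → Pᗮ), finrank ℝ P = n ∧ LipschitzWith M A ∧
    Γ = {x | ∃ p : P, x = (p : Euc d) + (A p : Euc d)}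

/-- `E` has big pieces of Lipschitz graphs with constants `M` and `δ`. -/
def HasBPLG {d : ℕ} (n : ℕ) (M : ℝ≥0) (δ : ℝ) (E : Set (Euc d)) : Prop :=
  0 < δ ∧ ∀ x ∈ E, ∀ r : ℝ, 0 < r → ENNReal.ofReal r ≤ EMetric.diam E →
    ∃ Γ : Set (Euc d), IsLipGraph n M Γ ∧
      ENNReal.ofReal (δ * r ^ n) ≤ μH[n] (E ∩ Γ ∩ closedBall x r)

/-- The coordinate subspace `ℝⁿ × {0} ⊆ ℝ^d`. -/
def coordSubspace (d n : ℕ) : Submodule ℝ (Euc d) where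
  carrier := {x | ∀ i : Fin d, n ≤ (i : ℕ) → x i = 0}
  add_mem' := by
    intro a b ha hb i hi
    simp [PiLp.add_apply, ha i hi, hb i hi]
  zero_mem' := by intro i hi; rfl
  smul_mem' := by
    intro c a ha i hi
    simp [PiLp.smul_apply, ha i hi]

/-- The closed ball of radius `ρ` around `W` in the Grassmannian `G(d,n)`, realised as a set
of subspaces of `ℝ^d`, with the metric `‖V - W‖ = ‖π_V - π_W‖` (operator norm). -/
def grBall {d : ℕ} (n : ℕ) (W : Submodule ℝ (Euc d)) (ρ : ℝ) : Set (Submodule ℝ (Euc d)) :=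
  {V | finrank ℝ V = n ∧ ‖projCLM V - projCLM W‖ ≤ ρ}

/-- The Borel σ-algebra on subspaces of `ℝ^d`, induced by `V ↦ π_V`. -/
instance grassMeasurableSpace (d : ℕ) : MeasurableSpace (Submodule ℝ (Euc d)) :=
  MeasurableSpace.comap (fun V => projCLM V) (borel (Euc d →L[ℝ] Euc d))

/-- The orthogonal group `O(d)`. -/
abbrev OG (d : ℕ) := Matrix.orthogonalGroup (Fin d) ℝ

instance (d : ℕ) : MeasurableSpace (OG d) := borel _

/-- `μ` is the Haar probability measure on the orthogonal group `O(d)`: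
a left-invariant Borel probability measure. -/
def IsHaarProb {d : ℕ} (μ : Measure (OG d)) : Prop :=
  IsProbabilityMeasure μ ∧ ∀ g : OG d, Measure.map (fun h => g * h) μ = μ

/-- The measure `γ_{d,n}` on the Grassmannian: the pushforward of the Haar probability
measure `μ` on `O(d)` under the map `g ↦ g(ℝⁿ × {0})`. -/
def grassmannOf {d : ℕ} (n : ℕ) (μ : Measure (OG d)) : Measure (Submodule ℝ (Euc d)) :=
  Measure.map
    (fun g : OG d => (coordSubspace d n).map
      (Matrix.toEuclideanLin (g : Matrix (Fin d) (Fin d) ℝ))) μ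

/-- The pushforward `π_{V♯}(Hⁿ|_E)` of `Hⁿ` restricted to `E` under the orthogonal
projection onto `V`. -/
def projPush {d : ℕ} (n : ℕ) (E : Set (Euc d)) (V : Submodule ℝ (Euc d)) : Measure (Euc d) :=
  Measure.map (projCLM V) (μH[n].restrict E)

/-- `Hⁿ` on the subspace `V`. -/
def hausdorffOn {d : ℕ} (n : ℕ) (V : Submodule ℝ (Euc d)) : Measure (Euc d) :=
  μH[n].restrict (V : Set (Euc d))

/-- The squared `L²(V)`-norm of the Radon–Nikodym derivative of `π_{V♯}(Hⁿ|_E)` with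
respect to `Hⁿ` on `V`. -/
def pushL2sq {d : ℕ} (n : ℕ) (E : Set (Euc d)) (V : Submodule ℝ (Euc d)) : ℝ≥0∞ :=
  ∫⁻ z, ((projPush n E V).rnDeriv (hausdorffOn n V) z) ^ 2 ∂(hausdorffOn n V)

/-- `π_{V♯}(Hⁿ|_E) ∈ L²(V)`: the pushforward is absolutely continuous with respect to `Hⁿ`
on `V`, with square-integrable density. -/
def MemL2 {d : ℕ} (n : ℕ) (E : Set (Euc d)) (V : Submodule ℝ (Euc d)) : Prop :=
  projPush n E V ≪ hausdorffOn n V ∧ pushL2sq n E V < ∞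

/-- The (two-sided) cone `X(x, V, α) = {y : |π_{V^⊥}(x - y)| ≤ α |x - y|}`. -/
def cone {d : ℕ} (V : Submodule ℝ (Euc d)) (x : Euc d) (α : ℝ) : Set (Euc d) :=
  {y | ‖projCLM Vᗮ (x - y)‖ ≤ α * ‖x - y‖}

/-- The truncated cone `X(x, V, α, R, r)`. -/
def coneAnn {d : ℕ} (V : Submodule ℝ (Euc d)) (x : Euc d) (α R r : ℝ) : Set (Euc d) :=
  cone V x α ∩ (closedBall x R \ ball x r)

/-- The vertical cone `X(x, α) := X(x, {0} × ℝ^{d-n}, α) = {y : |π_{ℝⁿ×{0}}(x-y)| ≤ α|x-y|}`. -/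
def vertCone {d : ℕ} (n : ℕ) (x : Euc d) (α : ℝ) : Set (Euc d) :=
  {y | ‖projCLM (coordSubspace d n) (x - y)‖ ≤ α * ‖x - y‖}

/-- The truncated vertical cone `X(x, α, R, r)`. -/
def vertConeAnn {d : ℕ} (n : ℕ) (x : Euc d) (α R r : ℝ) : Set (Euc d) :=
  vertCone n x α ∩ (closedBall x R \ ball x r)

/-- `E` satisfies the `n`-dimensional `(θ, M)`-property: for every `x ∈ E` at most `M`
dyadic scales `j` have `X(x, θ, 2^{-j}, 2^{-j-1}) ∩ E ≠ ∅`. -/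
def ThetaMProp {d : ℕ} (n : ℕ) (θ : ℝ) (M : ℕ) (E : Set (Euc d)) : Prop :=
  ∀ x ∈ E,
    {j : ℤ | (vertConeAnn n x θ (2 ^ (-j)) (2 ^ (-j - 1)) ∩ E).Nonempty}.Finite ∧
    {j : ℤ | (vertConeAnn n x θ (2 ^ (-j)) (2 ^ (-j - 1)) ∩ E).Nonempty}.ncard ≤ M

/-- The one-sided cone `X⁺(x, w, α)` in direction `w`. -/
def oneSidedCone {d : ℕ} (w : Euc d) (x : Euc d) (α : ℝ) : Set (Euc d) :=
  {y | ‖projCLM (Submodule.span ℝ {w})ᗮ (x - y)‖ ≤ α * ‖x - y‖ ∧ 0 ≤ ⟪y - x, w⟫}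

/-- The truncated one-sided cone `X⁺(x, w, α, R, r)`. -/
def oneSidedConeAnn {d : ℕ} (w : Euc d) (x : Euc d) (α R r : ℝ) : Set (Euc d) :=
  oneSidedCone w x α ∩ (closedBall x R \ ball x r)

/-- Combining `x ∈ ℝⁿ` and `y ∈ ℝ^{d-n}` into a point of `ℝ^d = ℝⁿ × ℝ^{d-n}`. -/
def pairFun {d n : ℕ} (x : Euc n) (y : Euc (d - n)) : Euc d :=
  WithLp.toLp 2 fun i => if h' : (i : ℕ) < n then x ⟨i, h'⟩ else y ⟨(i : ℕ) - n, by
    have := i.isLt; omega⟩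

lemma norm_projCLM_le {d : ℕ} (W : Submodule ℝ (Euc d)) (x : Euc d) :
    ‖projCLM W x‖ ≤ ‖x‖ := by
  have h1 : ‖projCLM W x‖ = ‖Submodule.orthogonalProjectionOnto W x‖ := rfl
  calc ‖projCLM W x‖ = ‖Submodule.orthogonalProjectionOnto W x‖ := h1
    _ ≤ ‖Submodule.orthogonalProjectionOnto W‖ * ‖x‖ := (Submodule.orthogonalProjectionOnto W).le_opNorm x
    _ ≤ 1 * ‖x‖ := by
        have := Submodule.orthogonalProjectionOnto_norm_le W
        exact mul_le_mul_of_nonneg_right this (norm_nonneg x)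
    _ = ‖x‖ := one_mul _

set_option maxHeartbeats 1600000 in
set_option maxRecDepth 8000 in
/-- a Lipschitz graph over `P` is also a Lipschitz graph over any plane `V`
sufficiently close to `P`, with controlled Lipschitz constant. -/
theorem stmt11 (n d : ℕ) (hn : 1 ≤ n) (hnd : n < d) (M : ℝ≥0)
    (P V : Submodule ℝ (Euc d)) (hP : finrank ℝ P = n) (hV : finrank ℝ V = n)
    (A : P → Pᗮ) (hA : LipschitzWith M A)
    (Γ : Set (Euc d)) (hΓ : Γ = {x | ∃ p : P, x = (p : Euc d) + (A p : Euc d)})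
    (hclose : ‖projCLM V - projCLM P‖ ≤ 1 / (2 * (1 + (M : ℝ)))) :
    ∃ AV : V → Vᗮ, LipschitzWith (3 * (1 + M)) AV ∧
      Γ = {x | ∃ v : V, x = (v : Euc d) + (AV v : Euc d)} := by
  classical
  have hM0 : (0:ℝ) ≤ M := M.coe_nonneg
  have h1M : (0:ℝ) < 1 + (M:ℝ) := by linarith
  set ε : ℝ := 1 / (2 * (1 + (M:ℝ))) with hεdef
  have hε0 : 0 < ε := by positivity
  have hεM : ε * (1 + (M:ℝ)) = 1/2 := by
    rw [hεdef]; field_simp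
  have hεle : ε ≤ 1/2 := by
    rw [hεdef]
    rw [div_le_div_iff₀ (by positivity) (by norm_num)]
    nlinarith
  -- pointwise closeness
  have hclosept : ∀ x : Euc d, ‖projCLM V x - projCLM P x‖ ≤ ε * ‖x‖ := by
    intro x
    have h1 := (projCLM V - projCLM P).le_opNorm x
    simp only [ContinuousLinearMap.sub_apply] at h1
    exact h1.trans (mul_le_mul_of_nonneg_right hclose (norm_nonneg x))
  -- the graph map
  set F : P → Euc d := fun p => (p : Euc d) + (A p : Euc d) with hFdef
  have hAlip : ∀ p q : P, ‖(A p : Euc d) - (A q : Euc d)‖ ≤ (M:ℝ) * ‖(p:Euc d) - (q:Euc d)‖ := by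
    intro p q
    have h1 := hA.dist_le_mul p q
    rw [Subtype.dist_eq, Subtype.dist_eq, dist_eq_norm, dist_eq_norm] at h1
    exact h1
  have lipF : ∀ p q : P, ‖F p - F q‖ ≤ (1 + (M:ℝ)) * ‖(p:Euc d) - (q:Euc d)‖ := by
    intro p q
    have h1 : F p - F q = ((p:Euc d) - q) + ((A p : Euc d) - (A q : Euc d)) := by
      simp only [hFdef]; abel
    rw [h1]
    calc ‖((p:Euc d) - q) + ((A p : Euc d) - (A q : Euc d))‖
        ≤ ‖(p:Euc d) - q‖ + ‖(A p : Euc d) - (A q : Euc d)‖ := norm_add_le _ _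
      _ ≤ ‖(p:Euc d) - q‖ + (M:ℝ) * ‖(p:Euc d) - q‖ := by
          have := hAlip p q; linarith
      _ = (1 + (M:ℝ)) * ‖(p:Euc d) - q‖ := by ring
  -- projection of F onto P
  have projP_F : ∀ p : P, projCLM P (F p) = (p : Euc d) := by
    intro p
    have h1 : Submodule.orthogonalProjectionOnto P ((p : Euc d) + (A p : Euc d)) = p := by
      rw [map_add, Submodule.orthogonalProjectionOnto_mem_subspace_eq_self,
        Submodule.orthogonalProjectionOnto_apply_of_mem_orthogonal (A p).2, add_zero]
    show (Submodule.orthogonalProjectionOnto P ((p : Euc d) + (A p : Euc d)) : Euc d) = (p : Euc d)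
    rw [h1]
  -- lower bound for the projected graph map
  have lower : ∀ p q : P, ‖(p:Euc d) - q‖ ≤ 2 * ‖projCLM V (F p) - projCLM V (F q)‖ := by
    intro p q
    have key : (p:Euc d) - q =
        (projCLM V (F p) - projCLM V (F q)) - ((projCLM V - projCLM P) (F p - F q)) := by
      simp only [ContinuousLinearMap.sub_apply, map_sub, projP_F]
      abel
    have h2 : ‖(projCLM V - projCLM P) (F p - F q)‖ ≤ (1/2) * ‖(p:Euc d) - q‖ := by
      have h3 : ‖(projCLM V - projCLM P) (F p - F q)‖ ≤ ε * ‖F p - F q‖ := by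
        simpa [ContinuousLinearMap.sub_apply] using hclosept (F p - F q)
      calc ‖(projCLM V - projCLM P) (F p - F q)‖ ≤ ε * ‖F p - F q‖ := h3
        _ ≤ ε * ((1 + (M:ℝ)) * ‖(p:Euc d) - q‖) :=
            mul_le_mul_of_nonneg_left (lipF p q) hε0.le
        _ = (1/2) * ‖(p:Euc d) - q‖ := by rw [← mul_assoc, hεM]
    have h4 : ‖(p:Euc d) - q‖ ≤ ‖projCLM V (F p) - projCLM V (F q)‖ +
        ‖(projCLM V - projCLM P) (F p - F q)‖ := by
      rw [key]; exact norm_sub_le _ _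
    linarith
  -- contraction bound
  have hAVbd : ∀ p q : P, ‖projCLM V (A p : Euc d) - projCLM V (A q : Euc d)‖ ≤
      ε * ((M:ℝ) * ‖(p:Euc d) - q‖) := by
    intro p q
    have hP0 : projCLM P ((A p : Euc d) - (A q : Euc d)) = 0 := by
      have : Submodule.orthogonalProjectionOnto P ((A p : Euc d) - (A q : Euc d)) = 0 := by
        have := Pᗮ.sub_mem (A p).2 (A q).2
        exact Submodule.orthogonalProjectionOnto_apply_of_mem_orthogonal this
      show (Submodule.orthogonalProjectionOnto P ((A p : Euc d) - (A q : Euc d)) : Euc d) = 0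
      rw [this]; rfl
    have key : projCLM V (A p : Euc d) - projCLM V (A q : Euc d) =
        (projCLM V - projCLM P) ((A p : Euc d) - (A q : Euc d)) := by
      rw [ContinuousLinearMap.sub_apply, hP0, sub_zero, map_sub]
    rw [key]
    calc ‖(projCLM V - projCLM P) ((A p : Euc d) - (A q : Euc d))‖
        ≤ ε * ‖(A p : Euc d) - (A q : Euc d)‖ := by
          simpa [ContinuousLinearMap.sub_apply] using hclosept ((A p : Euc d) - (A q : Euc d))
      _ ≤ ε * ((M:ℝ) * ‖(p:Euc d) - q‖) := mul_le_mul_of_nonneg_left (hAlip p q) hε0.le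
  -- the linear comparison map L : P → V
  set L : P →ₗ[ℝ] V := ((Submodule.orthogonalProjectionOnto V : Euc d →L[ℝ] V) : Euc d →ₗ[ℝ] V).comp
    P.subtype with hLdef
  have hLcoe : ∀ p : P, ((L p : V) : Euc d) = projCLM V (p : Euc d) := fun p => rfl
  have hLlow : ∀ p : P, ‖(p:Euc d)‖ ≤ 2 * ‖((L p : V) : Euc d)‖ := by
    intro p
    have hPp : projCLM P (p : Euc d) = (p : Euc d) := by
      show (Submodule.orthogonalProjectionOnto P (p : Euc d) : Euc d) = (p : Euc d)
      rw [Submodule.orthogonalProjectionOnto_mem_subspace_eq_self]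
    have h1 : ‖projCLM V (p:Euc d) - (p:Euc d)‖ ≤ ε * ‖(p:Euc d)‖ := by
      have := hclosept (p : Euc d)
      rwa [hPp] at this
    have h2 : ‖(p:Euc d)‖ ≤ ‖projCLM V (p:Euc d)‖ + ε * ‖(p:Euc d)‖ := by
      calc ‖(p:Euc d)‖ = ‖projCLM V (p:Euc d) - (projCLM V (p:Euc d) - (p:Euc d))‖ := by
            congr 1; abel
        _ ≤ ‖projCLM V (p:Euc d)‖ + ‖projCLM V (p:Euc d) - (p:Euc d)‖ := norm_sub_le _ _
        _ ≤ ‖projCLM V (p:Euc d)‖ + ε * ‖(p:Euc d)‖ := by linarith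
    have h3 : ε * ‖(p:Euc d)‖ ≤ (1/2) * ‖(p:Euc d)‖ :=
      mul_le_mul_of_nonneg_right hεle (norm_nonneg _)
    rw [hLcoe]
    linarith
  have hLinj : Function.Injective L := by
    intro p q hpq
    have h1 : ‖(p:Euc d) - q‖ ≤ 0 := by
      have h2 := hLlow (p - q)
      have h3 : L (p - q) = 0 := by rw [map_sub, hpq, sub_self]
      rw [h3] at h2
      simpa using h2
    have : (p:Euc d) - q = 0 := by
      have := norm_nonneg ((p:Euc d) - q)
      have : ‖(p:Euc d) - q‖ = 0 := le_antisymm h1 this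
      exact norm_eq_zero.mp this
    exact Subtype.ext (sub_eq_zero.mp this)
  have hLsurj : Function.Surjective L :=
    (LinearMap.injective_iff_surjective_of_finrank_eq_finrank (by rw [hP, hV])).mp hLinj
  set e : P ≃ₗ[ℝ] V := LinearEquiv.ofBijective L ⟨hLinj, hLsurj⟩ with hedef
  have heapp : ∀ p : P, e p = L p := fun p => rfl
  have hesymm : ∀ w : V, ‖((e.symm w : P) : Euc d)‖ ≤ 2 * ‖(w : Euc d)‖ := by
    intro w
    have h1 := hLlow (e.symm w)
    have h2 : L (e.symm w) = w := by
      rw [← heapp]; exact e.apply_symm_apply w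
    rwa [h2] at h1
  -- the (nonlinear) projected graph map g : P → V
  set g : P → V := fun p => Submodule.orthogonalProjectionOnto V (F p) with hgdef
  have hgcoe : ∀ p : P, ((g p : V) : Euc d) = projCLM V (F p) := fun p => rfl
  have ginj : Function.Injective g := by
    intro p q hpq
    have h1 := lower p q
    rw [← hgcoe, ← hgcoe, hpq, sub_self] at h1
    simp only [norm_zero, mul_zero] at h1
    have : ‖(p:Euc d) - q‖ = 0 := le_antisymm h1 (norm_nonneg _)
    exact Subtype.ext (sub_eq_zero.mp (norm_eq_zero.mp this))
  have gsurj : Function.Surjective g := by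
    intro v
    set T : P → P := fun p => e.symm (v - Submodule.orthogonalProjectionOnto V (A p : Euc d)) with hTdef
    have hTbd : ∀ p q : P, dist (T p) (T q) ≤ ((M:ℝ) / (1 + (M:ℝ))) * dist p q := by
      intro p q
      rw [Subtype.dist_eq, Subtype.dist_eq, dist_eq_norm, dist_eq_norm]
      have h1 : T p - T q = e.symm (Submodule.orthogonalProjectionOnto V (A q : Euc d) -
          Submodule.orthogonalProjectionOnto V (A p : Euc d)) := by
        rw [hTdef]
        rw [← map_sub e.symm]
        congr 1
        abel
      have h2 : ((Submodule.orthogonalProjectionOnto V (A q : Euc d) -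
          Submodule.orthogonalProjectionOnto V (A p : Euc d) : V) : Euc d) =
          projCLM V (A q : Euc d) - projCLM V (A p : Euc d) := rfl
      have h3 : ‖((T p - T q : P) : Euc d)‖ ≤
          2 * (ε * ((M:ℝ) * ‖(q:Euc d) - p‖)) := by
        rw [h1]
        calc ‖((e.symm (Submodule.orthogonalProjectionOnto V (A q : Euc d) -
              Submodule.orthogonalProjectionOnto V (A p : Euc d)) : P) : Euc d)‖
            ≤ 2 * ‖projCLM V (A q : Euc d) - projCLM V (A p : Euc d)‖ := by
              have := hesymm (Submodule.orthogonalProjectionOnto V (A q : Euc d) -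
                Submodule.orthogonalProjectionOnto V (A p : Euc d))
              rwa [h2] at this
          _ ≤ 2 * (ε * ((M:ℝ) * ‖(q:Euc d) - p‖)) := by
              have := hAVbd q p
              linarith
      have h4 : 2 * ε = 1 / (1 + (M:ℝ)) := by
        rw [hεdef]; field_simp
      have h5 : 2 * (ε * ((M:ℝ) * ‖(q:Euc d) - p‖)) =
          ((M:ℝ) / (1 + (M:ℝ))) * ‖(q:Euc d) - p‖ := by
        rw [show (2:ℝ) * (ε * ((M:ℝ) * ‖(q:Euc d) - (p:Euc d)‖)) =
          (2 * ε) * ((M:ℝ) * ‖(q:Euc d) - (p:Euc d)‖) by ring, h4]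
        field_simp
      have h6 : ‖(q:Euc d) - p‖ = ‖(p:Euc d) - q‖ := norm_sub_rev _ _
      have h7 : ‖((T p - T q : P) : Euc d)‖ = ‖(T p : Euc d) - (T q : Euc d)‖ := by
        rw [Submodule.coe_sub]
      rw [← h7]
      rw [show ‖(p:Euc d) - (q:Euc d)‖ = ‖((p - q : P) : Euc d)‖ by rw [Submodule.coe_sub]]
      rw [show ‖((p - q : P) : Euc d)‖ = ‖(p:Euc d) - (q:Euc d)‖ by rw [Submodule.coe_sub]]
      calc ‖((T p - T q : P) : Euc d)‖ ≤ 2 * (ε * ((M:ℝ) * ‖(q:Euc d) - p‖)) := h3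
        _ = ((M:ℝ) / (1 + (M:ℝ))) * ‖(q:Euc d) - p‖ := h5
        _ = ((M:ℝ) / (1 + (M:ℝ))) * ‖(p:Euc d) - q‖ := by rw [h6]
    set K : ℝ≥0 := M / (1 + M) with hKdef
    have hKcoe : (K : ℝ) = (M:ℝ) / (1 + (M:ℝ)) := by
      rw [hKdef]; push_cast; ring
    have hTlip : LipschitzWith K T := by
      apply LipschitzWith.of_dist_le_mul
      intro p q
      rw [hKcoe]
      exact hTbd p q
    have hK1 : K < 1 := by
      have h8 : (K:ℝ) < 1 := by
        rw [hKcoe, div_lt_one h1M]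
        norm_num
      exact_mod_cast h8
    have hcontr : ContractingWith K T := ⟨hK1, hTlip⟩
    haveI : Nonempty P := ⟨0⟩
    obtain ⟨p, hp⟩ : ∃ p : P, T p = p := ⟨_, hcontr.fixedPoint_isFixedPt⟩
    refine ⟨p, ?_⟩
    have h0 : e.symm (v - Submodule.orthogonalProjectionOnto V (A p : Euc d)) = p := hp
    have h1 : v - Submodule.orthogonalProjectionOnto V (A p : Euc d) = e p := by
      conv_rhs => rw [← h0]
      rw [e.apply_symm_apply]
    have h2 : (e p : V) = Submodule.orthogonalProjectionOnto V (p : Euc d) := rfl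
    show Submodule.orthogonalProjectionOnto V ((p : Euc d) + (A p : Euc d)) = v
    rw [map_add, ← h2, ← h1]
    abel
  -- the bijection and its inverse
  set G : P ≃ V := Equiv.ofBijective g ⟨ginj, gsurj⟩ with hGdef
  set φ : V → P := fun v => G.symm v with hφdef
  have hgφ : ∀ v : V, g (φ v) = v := fun v => G.apply_symm_apply v
  have hφg : ∀ p : P, φ (g p) = p := fun p => G.symm_apply_apply p
  -- the new graph function
  refine ⟨fun v => Submodule.orthogonalProjectionOnto Vᗮ (F (φ v)), ?_, ?_⟩
  · -- Lipschitz bound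
    apply LipschitzWith.of_dist_le_mul
    intro v w
    have hc : ((3 * (1 + M) : ℝ≥0) : ℝ) = 3 * (1 + (M:ℝ)) := by push_cast; ring
    rw [hc, Subtype.dist_eq, Subtype.dist_eq, dist_eq_norm, dist_eq_norm]
    have h1 : ‖(Submodule.orthogonalProjectionOnto Vᗮ (F (φ v)) : Euc d) -
        (Submodule.orthogonalProjectionOnto Vᗮ (F (φ w)) : Euc d)‖ ≤ ‖F (φ v) - F (φ w)‖ := by
      have : (Submodule.orthogonalProjectionOnto Vᗮ (F (φ v)) : Euc d) -
          (Submodule.orthogonalProjectionOnto Vᗮ (F (φ w)) : Euc d) = projCLM Vᗮ (F (φ v) - F (φ w)) := by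
        simp only [projCLM, ContinuousLinearMap.coe_comp', Function.comp_apply,
          Submodule.coe_subtypeL', Submodule.coe_subtype, map_sub]
      rw [this]
      exact norm_projCLM_le _ _
    have h2 : ‖F (φ v) - F (φ w)‖ ≤ (1 + (M:ℝ)) * ‖((φ v : P) : Euc d) - ((φ w : P) : Euc d)‖ :=
      lipF _ _
    have h3 : ‖((φ v : P) : Euc d) - ((φ w : P) : Euc d)‖ ≤ 2 * ‖(v : Euc d) - (w : Euc d)‖ := by
      have h4 := lower (φ v) (φ w)
      rw [← hgcoe, ← hgcoe, hgφ, hgφ] at h4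
      exact h4
    have h5 : (0:ℝ) ≤ ‖(v : Euc d) - (w : Euc d)‖ := norm_nonneg _
    calc ‖(Submodule.orthogonalProjectionOnto Vᗮ (F (φ v)) : Euc d) -
        (Submodule.orthogonalProjectionOnto Vᗮ (F (φ w)) : Euc d)‖
        ≤ (1 + (M:ℝ)) * (2 * ‖(v : Euc d) - (w : Euc d)‖) := by nlinarith
      _ ≤ 3 * (1 + (M:ℝ)) * ‖(v : Euc d) - (w : Euc d)‖ := by nlinarith
  · -- graph description
    have hsum : ∀ v : V, (v : Euc d) + (Submodule.orthogonalProjectionOnto Vᗮ (F (φ v)) : Euc d) = F (φ v) := by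
      intro v
      have h1 : (Submodule.orthogonalProjectionOnto V (F (φ v)) : Euc d) +
          (Submodule.orthogonalProjectionOnto Vᗮ (F (φ v)) : Euc d) = F (φ v) :=
        V.starProjection_add_starProjection_orthogonal (F (φ v))
      have h2 : (Submodule.orthogonalProjectionOnto V (F (φ v)) : Euc d) = (v : Euc d) := by
        have := hgφ v
        rw [hgdef] at this
        simp only [] at this
        rw [this]
      rw [h2] at h1
      exact h1
    rw [hΓ]
    ext x
    simp only [Set.mem_setOf_eq]
    constructor
    · rintro ⟨p, rfl⟩
      refine ⟨g p, ?_⟩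
      rw [hsum (g p), hφg p]
    · rintro ⟨v, rfl⟩
      exact ⟨φ v, by rw [hsum v]⟩

end
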